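/- Let (X,d) be a metric space and S, A : X → X. Suppose there exists φ ∈ Φ such that for all x, y ∈ X: whenever Ax ≠ Ay, d(Sx,Sy) ≤ φ(max{d(Ax,Ay), d(Ax,Sx)·d(Ay,Sy)/d(Ax,Ay), d(Ax,Sy)·d(Ay,Sx)/d(Ax,Ay)}), and whenever d(Ax,Ay) = 0, d(Sx,Sy) = 0. Suppose there exists a sequence {xₙ} in X with Axₙ = Sxₙ₋₁ for all n ≥ 1 (an (S,A)-orbit of x₀). Assume X is (S,S,A)-orbitally complete at x₀, the pair (A,S) is reciprocally continuous, and the pair (A,S) is either compatible or compatible of type (A). Then A and S have a unique common fixed point. -/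

import Mathlib

open Filter Topology

lemma aux_phi_zero (φ : ℝ → ℝ) (hφm : MonotoneOn φ (Set.Ici 0))
    (hφ0 : ∀ t : ℝ, 0 ≤ t → 0 ≤ φ t) (hφlt : ∀ t : ℝ, 0 < t → φ t < t) : φ 0 = 0 := by
  refine le_antisymm ?_ (hφ0 0 le_rfl)
  by_contra h
  push_neg at h
  have h1 : φ 0 ≤ φ (φ 0) := hφm (Set.mem_Ici.mpr le_rfl) (Set.mem_Ici.mpr h.le) h.le
  exact absurd (h1.trans_lt (hφlt _ h)) (lt_irrefl _)

lemma aux_le_phi_of_tendsto (φ : ℝ → ℝ) (hφc : ContinuousOn φ (Set.Ici 0))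
    {u v : ℕ → ℝ} {r s : ℝ} (hs : 0 ≤ s)
    (hvnn : ∀ᶠ n in atTop, 0 ≤ v n)
    (h : ∀ᶠ n in atTop, u n ≤ φ (v n))
    (hu : Tendsto u atTop (𝓝 r)) (hv : Tendsto v atTop (𝓝 s)) : r ≤ φ s := by
  have hφv : Tendsto (fun n => φ (v n)) atTop (𝓝 (φ s)) :=
    (hφc s hs).tendsto.comp (tendsto_nhdsWithin_iff.mpr ⟨hv, hvnn⟩)
  exact le_of_tendsto_of_tendsto hu hφv h

lemma aux_cauchy {X : Type*} [MetricSpace X] (φ : ℝ → ℝ)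
    (hφc : ContinuousOn φ (Set.Ici 0))
    (hφm : MonotoneOn φ (Set.Ici 0))
    (hφ0 : ∀ t : ℝ, 0 ≤ t → 0 ≤ φ t)
    (hφlt : ∀ t : ℝ, 0 < t → φ t < t)
    (y : ℕ → X) (d : ℕ → ℝ) (hd : ∀ n, d n = dist (y n) (y (n + 1)))
    (hkey : ∀ a b : ℕ, y a ≠ y b → dist (y (a+1)) (y (b+1)) ≤ φ (max (dist (y a) (y b))
      (max (dist (y a) (y (a+1)) * dist (y b) (y (b+1)) / dist (y a) (y b))
           (dist (y a) (y (b+1)) * dist (y b) (y (a+1)) / dist (y a) (y b)))))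
    (hz : ∀ a b : ℕ, y a = y b → y (a+1) = y (b+1)) : CauchySeq y := by
  classical
  have hφzero : φ 0 = 0 := aux_phi_zero φ hφm hφ0 hφlt
  have hdnn : ∀ n, 0 ≤ d n := fun n => (hd n) ▸ dist_nonneg
  -- Step 1: one-step estimates
  have hstep : ∀ n, d (n+1) ≤ φ (d n) ∧ d (n+1) ≤ d n := by
    intro n
    rcases eq_or_lt_of_le (hdnn n) with h0 | hpos
    · have hyz : y n = y (n+1) := dist_eq_zero.mp ((hd n) ▸ h0.symm)
      have h1 : d (n+1) = 0 := by rw [hd]; exact dist_eq_zero.mpr (hz _ _ hyz)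
      rw [h1, ← h0, hφzero]
      exact ⟨le_rfl, le_rfl⟩
    · have hposd : (0:ℝ) < dist (y n) (y (n+1)) := (hd n) ▸ hpos
      have hne : y n ≠ y (n+1) := dist_pos.mp hposd
      have H := hkey n (n+1) hne
      rw [dist_self, mul_zero, zero_div] at H
      rw [mul_div_cancel_left₀ _ hposd.ne'] at H
      rw [← hd n, ← hd (n+1)] at H
      rw [max_eq_left (hdnn (n+1))] at H
      have hle : d (n+1) ≤ d n := by
        by_contra hgt
        push_neg at hgt
        rw [max_eq_right hgt.le] at H
        exact absurd (H.trans_lt (hφlt _ (lt_of_le_of_lt (hdnn n) hgt))) (lt_irrefl _)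
      rw [max_eq_left hle] at H
      exact ⟨H, hle⟩
  have hanti : Antitone d := antitone_nat_of_succ_le (fun n => (hstep n).2)
  -- Step 2: d tends to 0
  have hd0 : Tendsto d atTop (𝓝 0) := by
    have hbdd : BddBelow (Set.range d) := ⟨0, by rintro _ ⟨n, rfl⟩; exact hdnn n⟩
    have htend : Tendsto d atTop (𝓝 (⨅ i, d i)) := tendsto_atTop_ciInf hanti hbdd
    have hr0 : 0 ≤ ⨅ i, d i := le_ciInf hdnn
    have hrphi : (⨅ i, d i) ≤ φ (⨅ i, d i) :=
      aux_le_phi_of_tendsto φ hφc hr0 (Eventually.of_forall hdnn)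
        (Eventually.of_forall fun n => (hstep n).1)
        ((tendsto_add_atTop_iff_nat 1).mpr htend) htend
    have h0 : (⨅ i, d i) = 0 := by
      rcases eq_or_lt_of_le hr0 with h | h
      · exact h.symm
      · exact absurd (hrphi.trans_lt (hφlt _ h)) (lt_irrefl _)
    rwa [h0] at htend
  -- Step 3: Cauchy by contradiction
  by_contra hC
  rw [Metric.cauchySeq_iff] at hC
  push_neg at hC
  obtain ⟨ε, hε, hNC⟩ := hC
  obtain ⟨K, hK⟩ := (eventually_atTop).mp
    (hd0.eventually (gt_mem_nhds (show (0:ℝ) < ε/4 by positivity)))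
  set t : ℕ → ℝ := fun k => max (ε + d (k-1))
    (max (d (k-1) * d (k-1) / (ε/2)) (ε * (ε + 2 * d (k-1)) / (ε - 2 * d (k-1)))) with ht_def
  have hmain : ∀ k, K + 1 ≤ k → ε ≤ φ (t k) := by
    intro k hk
    obtain ⟨m, hm, n, hn, hdist⟩ := hNC k
    have hmn : m ≠ n := by
      rintro rfl
      rw [dist_self] at hdist
      exact absurd (lt_of_lt_of_le hε hdist) (lt_irrefl _)
    have hNM : min m n < max m n := by
      rcases lt_or_gt_of_ne hmn with h | h
      · rw [min_eq_left h.le, max_eq_right h.le]; exact h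
      · rw [min_eq_right h.le, max_eq_left h.le]; exact h
    have hdist' : ε ≤ dist (y (max m n)) (y (min m n)) := by
      rcases le_total m n with h | h
      · rw [min_eq_left h, max_eq_right h, dist_comm]; exact hdist
      · rw [min_eq_right h, max_eq_left h]; exact hdist
    obtain ⟨N, hNk, hex⟩ : ∃ N, k ≤ N ∧ ∃ j, N < j ∧ ε ≤ dist (y j) (y N) :=
      ⟨min m n, le_min hm hn, max m n, hNM, hdist'⟩
    obtain ⟨M, ⟨hNM', hdM⟩, hmin⟩ :
        ∃ M, (N < M ∧ ε ≤ dist (y M) (y N)) ∧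
          ∀ j < M, ¬(N < j ∧ ε ≤ dist (y j) (y N)) :=
      ⟨Nat.find hex, Nat.find_spec hex, fun j hj => Nat.find_min hex hj⟩
    obtain ⟨a, rfl⟩ : ∃ a, M = a + 1 :=
      ⟨M - 1, (Nat.succ_pred_eq_of_pos (lt_of_le_of_lt (Nat.zero_le N) hNM')).symm⟩
    obtain ⟨b, rfl⟩ : ∃ b, N = b + 1 :=
      ⟨N - 1, (Nat.succ_pred_eq_of_pos (lt_of_lt_of_le (by omega : 0 < k) hNk)).symm⟩
    have hba : b + 1 ≤ a := by omega
    have he4 : d (k-1) < ε/4 := hK (k-1) (by omega)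
    have henn : 0 ≤ d (k-1) := hdnn _
    have hdae : d a ≤ d (k-1) := hanti (by omega)
    have hdbe : d b ≤ d (k-1) := hanti (by omega)
    have hprev : dist (y a) (y (b+1)) < ε := by
      rcases eq_or_lt_of_le hba with rfl | h
      · rw [dist_self]; exact hε
      · have := hmin a (by omega)
        push_neg at this
        exact lt_of_not_ge (fun hc => absurd (this (by omega)) (not_lt.mpr hc))
    -- distance estimates
    have htri : dist (y (a+1)) (y (b+1)) ≤ d a + dist (y a) (y b) + d b := by
      calc dist (y (a+1)) (y (b+1)) ≤
          dist (y (a+1)) (y a) + dist (y a) (y b) + dist (y b) (y (b+1)) :=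
            dist_triangle4 _ _ _ _
        _ = d a + dist (y a) (y b) + d b := by rw [hd a, hd b, dist_comm (y (a+1))]
    have hden_lb : ε - 2 * d (k-1) ≤ dist (y a) (y b) := by
      have := hdM.trans htri
      linarith
    have hden_pos : (0:ℝ) < dist (y a) (y b) := by linarith
    have hden_ub : dist (y a) (y b) < ε + d (k-1) := by
      have h1 : dist (y a) (y b) ≤ dist (y a) (y (b+1)) + dist (y (b+1)) (y b) :=
        dist_triangle _ _ _
      have h2 : dist (y (b+1)) (y b) = d b := by rw [hd b, dist_comm]
      linarith
    have hney : y a ≠ y b := dist_pos.mp hden_pos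
    have H := hkey a b hney
    -- bound the argument of φ
    have harg : max (dist (y a) (y b))
        (max (dist (y a) (y (a+1)) * dist (y b) (y (b+1)) / dist (y a) (y b))
             (dist (y a) (y (b+1)) * dist (y b) (y (a+1)) / dist (y a) (y b))) ≤ t k := by
      rw [ht_def]
      refine max_le_max hden_ub.le (max_le_max ?_ ?_)
      · rw [← hd a, ← hd b]
        exact div_le_div₀ (mul_nonneg henn henn)
          (mul_le_mul hdae hdbe (hdnn b) henn) (by positivity) (by linarith)
      · have hr : dist (y b) (y (a+1)) ≤ ε + 2 * d (k-1) := by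
          have h1 : dist (y b) (y (a+1)) ≤ dist (y b) (y a) + dist (y a) (y (a+1)) :=
            dist_triangle _ _ _
          rw [dist_comm (y b) (y a), ← hd a] at h1
          linarith
        exact div_le_div₀ (by positivity)
          (mul_le_mul hprev.le hr dist_nonneg hε.le) (by linarith) hden_lb
    have htknn : (0:ℝ) ≤ t k := le_trans (by positivity) (le_max_left _ _)
    have hargnn : (0:ℝ) ≤ max (dist (y a) (y b))
        (max (dist (y a) (y (a+1)) * dist (y b) (y (b+1)) / dist (y a) (y b))
             (dist (y a) (y (b+1)) * dist (y b) (y (a+1)) / dist (y a) (y b))) :=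
      le_trans dist_nonneg (le_max_left _ _)
    exact hdM.trans (H.trans (hφm (Set.mem_Ici.mpr hargnn) (Set.mem_Ici.mpr htknn) harg))
  -- take limits
  have he : Tendsto (fun k => d (k - 1)) atTop (𝓝 0) := hd0.comp (tendsto_sub_atTop_nat 1)
  have h1 : Tendsto (fun k => ε + d (k-1)) atTop (𝓝 (ε + 0)) := tendsto_const_nhds.add he
  have h2 : Tendsto (fun k => d (k-1) * d (k-1) / (ε/2)) atTop (𝓝 (0 * 0 / (ε/2))) :=
    (he.mul he).div_const _
  have h3 : Tendsto (fun k => ε * (ε + 2 * d (k-1)) / (ε - 2 * d (k-1))) atTop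
      (𝓝 (ε * (ε + 2 * 0) / (ε - 2 * 0))) :=
    (tendsto_const_nhds.mul (tendsto_const_nhds.add (tendsto_const_nhds.mul he))).div
      (tendsto_const_nhds.sub (tendsto_const_nhds.mul he)) (by norm_num [hε.ne'])
  have hT : Tendsto t atTop (𝓝 (max (ε + 0) (max (0 * 0 / (ε/2)) (ε * (ε + 2*0) / (ε - 2*0))))) :=
    h1.max (h2.max h3)
  have hval : max (ε + 0) (max ((0:ℝ) * 0 / (ε/2)) (ε * (ε + 2*0) / (ε - 2*0))) = ε := by
    have : ε * (ε + 2*0) / (ε - 2*0) = ε := by rw [mul_zero, add_zero, sub_zero, mul_div_cancel_right₀ _ hε.ne']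
    rw [this, add_zero, zero_mul, zero_div, max_eq_right hε.le, max_self]
  rw [hval] at hT
  have hfin : ε ≤ φ ε :=
    aux_le_phi_of_tendsto φ hφc hε.le
      (Eventually.of_forall (fun k => le_trans (add_nonneg hε.le (hdnn _)) (le_max_left _ _)))
      (eventually_atTop.mpr ⟨K+1, hmain⟩) tendsto_const_nhds hT
  exact absurd (hfin.trans_lt (hφlt ε hε)) (lt_irrefl _)
/-- The two-map case `S = T`: under the φ-contractive inequality for the
pair `(S,A)`, existence of an `(S,A)`-orbit, orbital completeness at `x₀`, reciprocal
continuity of `(A,S)`, and `(A,S)` being either compatible or compatible of type (A),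
the maps `A` and `S` have a unique common fixed point. -/
theorem stmt_4 {X : Type*} [MetricSpace X] (S A : X → X) (φ : ℝ → ℝ)
    (hφc : ContinuousOn φ (Set.Ici 0))
    (hφm : MonotoneOn φ (Set.Ici 0))
    (hφ0 : ∀ t : ℝ, 0 ≤ t → 0 ≤ φ t)
    (hφlt : ∀ t : ℝ, 0 < t → φ t < t)
    (hc1 : ∀ x y : X, A x ≠ A y →
      dist (S x) (S y) ≤ φ (max (dist (A x) (A y))
        (max (dist (A x) (S x) * dist (A y) (S y) / dist (A x) (A y))
             (dist (A x) (S y) * dist (A y) (S x) / dist (A x) (A y)))))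
    (hc2 : ∀ x y : X, dist (A x) (A y) = 0 → dist (S x) (S y) = 0)
    (x : ℕ → X)
    (horb : ∀ n : ℕ, A (x (n + 1)) = S (x n))
    -- X is orbitally complete at x₀
    (hcomp : ∀ u : ℕ → X, (∀ k : ℕ, ∃ n : ℕ, u k = A (x (n + 1))) → CauchySeq u →
      ∃ l : X, Tendsto u atTop (𝓝 l))
    -- the pair (A,S) is reciprocally continuous
    (hrcAS : ∀ (z : ℕ → X) (t : X),
      Tendsto (fun n => A (z n)) atTop (𝓝 t) → Tendsto (fun n => S (z n)) atTop (𝓝 t) →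
      Tendsto (fun n => A (S (z n))) atTop (𝓝 (A t)) ∧
      Tendsto (fun n => S (A (z n))) atTop (𝓝 (S t)))
    -- the pair (A,S) is either compatible or compatible of type (A)
    (hor : (∀ (z : ℕ → X) (t : X),
        Tendsto (fun n => A (z n)) atTop (𝓝 t) → Tendsto (fun n => S (z n)) atTop (𝓝 t) →
        Tendsto (fun n => dist (S (A (z n))) (A (S (z n)))) atTop (𝓝 0)) ∨
      (∀ (z : ℕ → X) (t : X),
        Tendsto (fun n => A (z n)) atTop (𝓝 t) → Tendsto (fun n => S (z n)) atTop (𝓝 t) →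
        Tendsto (fun n => dist (A (S (z n))) (S (S (z n)))) atTop (𝓝 0) ∧
        Tendsto (fun n => dist (S (A (z n))) (A (A (z n)))) atTop (𝓝 0))) :
    ∃! u : X, S u = u ∧ A u = u := by
  -- the orbit sequence y n = S (x n)
  have hkey : ∀ a b : ℕ, S (x a) ≠ S (x b) →
      dist (S (x (a+1))) (S (x (b+1))) ≤ φ (max (dist (S (x a)) (S (x b)))
        (max (dist (S (x a)) (S (x (a+1))) * dist (S (x b)) (S (x (b+1))) / dist (S (x a)) (S (x b)))
             (dist (S (x a)) (S (x (b+1))) * dist (S (x b)) (S (x (a+1))) / dist (S (x a)) (S (x b))))) := by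
    intro a b h
    have H := hc1 (x (a+1)) (x (b+1)) (by rw [horb a, horb b]; exact h)
    rwa [horb a, horb b] at H
  have hz : ∀ a b : ℕ, S (x a) = S (x b) → S (x (a+1)) = S (x (b+1)) := by
    intro a b h
    have H := hc2 (x (a+1)) (x (b+1)) (by rw [horb a, horb b, h, dist_self])
    exact dist_eq_zero.mp H
  have hcauchy : CauchySeq (fun n => S (x n)) :=
    aux_cauchy φ hφc hφm hφ0 hφlt (fun n => S (x n))
      (fun n => dist (S (x n)) (S (x (n+1)))) (fun n => rfl) hkey hz
  obtain ⟨t, ht⟩ := hcomp (fun n => S (x n)) (fun k => ⟨k, (horb k).symm⟩) hcauchy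
  have hSx : Tendsto (fun n => S (x n)) atTop (𝓝 t) := ht
  have hAx : Tendsto (fun n => A (x n)) atTop (𝓝 t) := by
    rw [← tendsto_add_atTop_iff_nat 1]
    simpa only [horb] using ht
  obtain ⟨hASx, hSAx⟩ := hrcAS x t hAx hSx
  -- first: A t = S t
  have hAtSt : A t = S t := by
    rcases hor with hcompat | htypeA
    · have h0 := hcompat x t hAx hSx
      have h1 : Tendsto (fun n => dist (S (A (x n))) (A (S (x n)))) atTop
          (𝓝 (dist (S t) (A t))) := hSAx.dist hASx
      have h2 : dist (S t) (A t) = 0 := tendsto_nhds_unique h1 h0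
      exact (dist_eq_zero.mp (by rwa [dist_comm] at h2))
    · obtain ⟨h1, h2⟩ := htypeA x t hAx hSx
      have hSSx : Tendsto (fun n => S (S (x n))) atTop (𝓝 (A t)) := hASx.congr_dist h1
      have hAAx : Tendsto (fun n => A (A (x n))) atTop (𝓝 (S t)) := hSAx.congr_dist h2
      by_contra hne
      have hrpos : 0 < dist (S t) (A t) := dist_pos.mpr (fun h => hne h.symm)
      have hden : Tendsto (fun n => dist (A (A (x n))) (A (S (x n)))) atTop
          (𝓝 (dist (S t) (A t))) := hAAx.dist hASx
      have hevne : ∀ᶠ n in atTop, A (A (x n)) ≠ A (S (x n)) :=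
        (hden.eventually (lt_mem_nhds hrpos)).mono fun n hn => dist_pos.mp hn
      have hE : ∀ᶠ n in atTop, dist (S (A (x n))) (S (S (x n))) ≤
          φ (max (dist (A (A (x n))) (A (S (x n))))
            (max (dist (A (A (x n))) (S (A (x n))) * dist (A (S (x n))) (S (S (x n))) /
              dist (A (A (x n))) (A (S (x n))))
             (dist (A (A (x n))) (S (S (x n))) * dist (A (S (x n))) (S (A (x n))) /
              dist (A (A (x n))) (A (S (x n)))))) :=
        hevne.mono fun n hn => hc1 (A (x n)) (S (x n)) hn
      have hL : Tendsto (fun n => dist (S (A (x n))) (S (S (x n)))) atTop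
          (𝓝 (dist (S t) (A t))) := hSAx.dist hSSx
      have hnum1 := hAAx.dist hSAx
      have hnum2 := hASx.dist hSSx
      have hnum3 := hAAx.dist hSSx
      have hnum4 := hASx.dist hSAx
      have hargT : Tendsto (fun n => max (dist (A (A (x n))) (A (S (x n))))
            (max (dist (A (A (x n))) (S (A (x n))) * dist (A (S (x n))) (S (S (x n))) /
              dist (A (A (x n))) (A (S (x n))))
             (dist (A (A (x n))) (S (S (x n))) * dist (A (S (x n))) (S (A (x n))) /
              dist (A (A (x n))) (A (S (x n)))))) atTop
          (𝓝 (max (dist (S t) (A t))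
            (max (dist (S t) (S t) * dist (A t) (A t) / dist (S t) (A t))
              (dist (S t) (A t) * dist (A t) (S t) / dist (S t) (A t))))) :=
        hden.max (((hnum1.mul hnum2).div hden hrpos.ne').max
          ((hnum3.mul hnum4).div hden hrpos.ne'))
      have hval : max (dist (S t) (A t))
            (max (dist (S t) (S t) * dist (A t) (A t) / dist (S t) (A t))
              (dist (S t) (A t) * dist (A t) (S t) / dist (S t) (A t))) = dist (S t) (A t) := by
        rw [dist_comm (A t) (S t), mul_div_cancel_left₀ _ hrpos.ne']
        simp only [dist_self, zero_mul, zero_div]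
        rw [max_eq_right dist_nonneg, max_self]
      rw [hval] at hargT
      have hfin : dist (S t) (A t) ≤ φ (dist (S t) (A t)) :=
        aux_le_phi_of_tendsto φ hφc hrpos.le
          (Eventually.of_forall fun n => le_trans dist_nonneg (le_max_left _ _))
          hE hL hargT
      exact absurd (hfin.trans_lt (hφlt _ hrpos)) (lt_irrefl _)
  -- second: S t = t
  have hSx1 : Tendsto (fun n => S (x (n+1))) atTop (𝓝 t) :=
    (tendsto_add_atTop_iff_nat 1).mpr hSx
  have hSt : S t = t := by
    by_contra hne
    have hrpos : 0 < dist t (S t) := dist_pos.mpr (fun h => hne h.symm)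
    have hden : Tendsto (fun n => dist (A (x (n+1))) (A t)) atTop (𝓝 (dist t (S t))) := by
      have h := hSx.dist (tendsto_const_nhds (x := S t))
      simp only [horb, hAtSt]
      exact h
    have hevne : ∀ᶠ n in atTop, A (x (n+1)) ≠ A t :=
      (hden.eventually (lt_mem_nhds hrpos)).mono fun n hn => dist_pos.mp hn
    have hE : ∀ᶠ n in atTop, dist (S (x (n+1))) (S t) ≤
        φ (max (dist (A (x (n+1))) (A t))
          (max (dist (A (x (n+1))) (S (x (n+1))) * dist (A t) (S t) / dist (A (x (n+1))) (A t))
            (dist (A (x (n+1))) (S t) * dist (A t) (S (x (n+1))) / dist (A (x (n+1))) (A t)))) :=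
      hevne.mono fun n hn => hc1 (x (n+1)) t hn
    have hL : Tendsto (fun n => dist (S (x (n+1))) (S t)) atTop (𝓝 (dist t (S t))) :=
      hSx1.dist tendsto_const_nhds
    have hg1 : Tendsto (fun n => dist (A (x (n+1))) (S (x (n+1)))) atTop (𝓝 (dist t t)) := by
      simp only [horb]
      exact hSx.dist hSx1
    have hg2 : Tendsto (fun n => dist (A (x (n+1))) (S t)) atTop (𝓝 (dist t (S t))) := by
      simp only [horb]
      exact hSx.dist tendsto_const_nhds
    have hg3 : Tendsto (fun n => dist (A t) (S (x (n+1)))) atTop (𝓝 (dist (S t) t)) := by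
      simp only [hAtSt]
      exact tendsto_const_nhds.dist hSx1
    have hargT : Tendsto (fun n => max (dist (A (x (n+1))) (A t))
          (max (dist (A (x (n+1))) (S (x (n+1))) * dist (A t) (S t) / dist (A (x (n+1))) (A t))
            (dist (A (x (n+1))) (S t) * dist (A t) (S (x (n+1))) / dist (A (x (n+1))) (A t))))
        atTop (𝓝 (max (dist t (S t))
          (max (dist t t * dist (A t) (S t) / dist t (S t))
            (dist t (S t) * dist (S t) t / dist t (S t))))) :=
      hden.max (((hg1.mul tendsto_const_nhds).div hden hrpos.ne').max
        ((hg2.mul hg3).div hden hrpos.ne'))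
    have hval : max (dist t (S t))
          (max (dist t t * dist (A t) (S t) / dist t (S t))
            (dist t (S t) * dist (S t) t / dist t (S t))) = dist t (S t) := by
      rw [dist_comm (S t) t, mul_div_cancel_left₀ _ hrpos.ne']
      simp only [dist_self, zero_mul, zero_div]
      rw [max_eq_right dist_nonneg, max_self]
    rw [hval] at hargT
    have hfin : dist t (S t) ≤ φ (dist t (S t)) :=
      aux_le_phi_of_tendsto φ hφc hrpos.le
        (Eventually.of_forall fun n => le_trans dist_nonneg (le_max_left _ _))
        hE hL hargT
    exact absurd (hfin.trans_lt (hφlt _ hrpos)) (lt_irrefl _)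
  have hAt : A t = t := hAtSt.trans hSt
  refine ⟨t, ⟨hSt, hAt⟩, ?_⟩
  rintro v ⟨hSv, hAv⟩
  by_contra hvt
  have hrpos : 0 < dist v t := dist_pos.mpr hvt
  have hne : A v ≠ A t := by rw [hAv, hAt]; exact hvt
  have H := hc1 v t hne
  rw [hAv, hAt, hSv, hSt] at H
  rw [dist_comm t v, mul_div_cancel_left₀ _ hrpos.ne'] at H
  simp only [dist_self, zero_mul, zero_div] at H
  rw [max_eq_right dist_nonneg, max_self] at H
  exact absurd (H.trans_lt (hφlt _ hrpos)) (lt_irrefl _)
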